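/- Let K ⊂ ℂ^n be compact, let Q : K → ℝ be continuous, and let ν be a finite Borel measure on K such that (K, ν, Q) satisfies the weighted Bernstein–Markov property. For k ≥ 1 let N_k = C(n+k, k), let e_1,…,e_{N_k} be the monomials of degree at most k in n variables, and for x = (x_1,…,x_{N_k}) ∈ K^{N_k} let VDM_k(x) := det[e_i(x_j)]_{i,j=1,…,N_k}. Set δ^{Q,k}(K) := (max_{x ∈ K^{N_k}} |VDM_k(x)| e^{-kQ(x_1)}⋯e^{-kQ(x_{N_k})})^{(n+1)/(n k N_k)} and Z_k := ∫_{K^{N_k}} |VDM_k(x)|² e^{-2kQ(x_1)}⋯e^{-2kQ(x_{N_k})} dν(x_1)⋯dν(x_{N_k}). If δ^{Q,k}(K) → L as k → ∞ for some L ≥ 0, then Z_k^{(n+1)/(2 n k N_k)} → L as k → ∞. -/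

import Mathlib

open MeasureTheory Filter
open scoped ENNReal NNReal

variable {n : ℕ}

/-- `(K, ν, Q)` satisfies the weighted Bernstein–Markov property in `ℂ^n`
(with `w = e^{-Q}`). -/
def WeightedBernsteinMarkov (K : Set (Fin n → ℂ)) (ν : Measure (Fin n → ℂ))
    (Q : (Fin n → ℂ) → ℝ) : Prop :=
  ∀ ε : ℝ, 0 < ε → ∃ C : ℝ, 0 < C ∧ ∀ k : ℕ, 1 ≤ k → ∀ p : MvPolynomial (Fin n) ℂ,
    p.totalDegree ≤ k → ∀ z ∈ K,
      ‖MvPolynomial.eval z p‖ * Real.exp (-Q z) ^ k ≤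
        C * (1 + ε) ^ k *
          Real.sqrt (∫ w in K, ‖MvPolynomial.eval w p‖ ^ 2 *
            Real.exp (-Q w) ^ (2 * k) ∂ν)

/-- `N_k = C(n+k, k)`, the dimension of the space of polynomials of degree at most `k`
in `n` variables. -/
def Nk (n k : ℕ) : ℕ := (n + k).choose k

/-- The generalized Vandermonde determinant `VDM_k(x) = det [e_i(x_j)]`, where the
`e_i` are the monomials of degree at most `k` in `n` variables, enumerated by a
bijection `e : Fin N_k ≃ {multi-indices of total degree ≤ k}`. -/
noncomputable def VDM (k : ℕ)
    (e : Fin (Nk n k) ≃ {d : Fin n →₀ ℕ // (d.sum fun _ m => m) ≤ k})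
    (x : Fin (Nk n k) → (Fin n → ℂ)) : ℂ :=
  Matrix.det (Matrix.of fun i j : Fin (Nk n k) => ∏ t : Fin n, x j t ^ ((e i : Fin n →₀ ℕ) t))

/-- `Z_k = ∫_{K^{N_k}} |VDM_k(x)|² e^{-2kQ(x_1)} ⋯ e^{-2kQ(x_{N_k})} dν(x_1)⋯dν(x_{N_k})`. -/
noncomputable def Zk (K : Set (Fin n → ℂ)) (ν : Measure (Fin n → ℂ))
    (Q : (Fin n → ℂ) → ℝ) (k : ℕ)
    (e : Fin (Nk n k) ≃ {d : Fin n →₀ ℕ // (d.sum fun _ m => m) ≤ k}) : ℝ :=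
  ∫ x in {x : Fin (Nk n k) → (Fin n → ℂ) | ∀ j, x j ∈ K},
    ‖VDM k e x‖ ^ 2 * ∏ j : Fin (Nk n k), Real.exp (-(2 * (k : ℝ)) * Q (x j))
    ∂(Measure.pi fun _ : Fin (Nk n k) => ν)

/-- The weighted `k`-th order diameter
`δ^{Q,k}(K) = (max_{x ∈ K^{N_k}} |VDM_k(x)| e^{-kQ(x_1)}⋯e^{-kQ(x_{N_k})})^{(n+1)/(n k N_k)}`. -/
noncomputable def deltaQk (K : Set (Fin n → ℂ)) (Q : (Fin n → ℂ) → ℝ) (k : ℕ)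
    (e : Fin (Nk n k) ≃ {d : Fin n →₀ ℕ // (d.sum fun _ m => m) ≤ k}) : ℝ :=
  (sSup ((fun x : Fin (Nk n k) → (Fin n → ℂ) =>
      ‖VDM k e x‖ * ∏ j : Fin (Nk n k), Real.exp (-(k : ℝ) * Q (x j))) ''
    {x : Fin (Nk n k) → (Fin n → ℂ) | ∀ j, x j ∈ K})) ^
      (((n : ℝ) + 1) / ((n : ℝ) * (k : ℝ) * (Nk n k : ℝ)))


lemma pi_restrict_eq {ι : Type*} [Fintype ι] {α : Type*} [MeasurableSpace α]
    (ν : Measure α) [IsFiniteMeasure ν] {K : Set α} (hK : MeasurableSet K) :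
    Measure.pi (fun _ : ι => ν.restrict K) =
      (Measure.pi fun _ : ι => ν).restrict (Set.pi Set.univ fun _ => K) := by
  refine Measure.pi_eq fun s hs => ?_
  rw [Measure.restrict_apply (MeasurableSet.univ_pi hs), ← Set.pi_inter_distrib, Measure.pi_pi]
  simp [Measure.restrict_apply (hs _)]

lemma exists_poly (k : ℕ) (e : Fin (Nk n k) ≃ {d : Fin n →₀ ℕ // (d.sum fun _ m => m) ≤ k})
    (x : Fin (Nk n k) → (Fin n → ℂ)) (j0 : Fin (Nk n k)) :
    ∃ p : MvPolynomial (Fin n) ℂ, p.totalDegree ≤ k ∧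
      ∀ z, MvPolynomial.eval z p = VDM k e (Function.update x j0 z) := by
  classical
  set A : Matrix (Fin (Nk n k)) (Fin (Nk n k)) ℂ :=
    Matrix.of (fun i j => ∏ t, x j t ^ ((e i : Fin n →₀ ℕ) t)) with hA
  refine ⟨∑ i, MvPolynomial.monomial ((e i : Fin n →₀ ℕ)) (A.cramer (Pi.single i 1) j0), ?_, ?_⟩
  · refine (MvPolynomial.totalDegree_finset_sum _ _).trans (Finset.sup_le fun i _ => ?_)
    exact (MvPolynomial.totalDegree_monomial_le _ _).trans (e i).2
  · intro z
    have hM : VDM k e (Function.update x j0 z)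
        = (A.updateCol j0 (fun i => ∏ t, z t ^ ((e i : Fin n →₀ ℕ) t))).det := by
      unfold VDM
      congr 1
      ext i j
      by_cases h : j = j0
      · subst h; simp [Matrix.updateCol_apply, hA]
      · simp [Matrix.updateCol_apply, h, hA, Function.update_of_ne h]
    rw [hM, ← Matrix.cramer_apply]
    set b : Fin (Nk n k) → ℂ := fun i => ∏ t, z t ^ ((e i : Fin n →₀ ℕ) t) with hbdef
    have hb : b = ∑ i, Pi.single i (b i) := (Finset.univ_sum_single b).symm
    rw [hb]
    simp only [map_sum, Finset.sum_apply]
    refine Finset.sum_congr rfl fun i _ => ?_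
    have hsingle : Pi.single i (b i) = b i • (Pi.single i 1 : Fin (Nk n k) → ℂ) := by
      rw [← Pi.single_smul, smul_eq_mul, mul_one]
    rw [hsingle, _root_.map_smul, Pi.smul_apply, smul_eq_mul]
    rw [MvPolynomial.eval_monomial]
    rw [Finsupp.prod_fintype _ _ (fun t => pow_zero _)]
    ring

open Function in
lemma induction_bound {ι : Type*} [Fintype ι] [DecidableEq ι] {α : Type*}
    [TopologicalSpace α] [SecondCountableTopology α] [MeasurableSpace α] [BorelSpace α] [T2Space α]
    (ν : Measure α) [IsFiniteMeasure ν] {K : Set α} (hK : IsCompact K)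
    {f : (ι → α) → ℝ} (hf : Continuous f) (hf0 : ∀ x, 0 ≤ f x)
    {B : ℝ} (hB : 0 ≤ B)
    (hstep : ∀ x : ι → α, (∀ j, x j ∈ K) → ∀ j0 : ι,
      f x ≤ B * ∫ t in K, f (Function.update x j0 t) ∂ν) :
    ∀ x : ι → α, (∀ j, x j ∈ K) →
      f x ≤ B ^ (Fintype.card ι) *
        ∫ y in Set.pi Set.univ (fun _ => K), f y ∂(Measure.pi fun _ : ι => ν) := by
  classical
  set ν' := ν.restrict K with hν'
  set fl : (ι → α) → ℝ≥0∞ := fun x => ENNReal.ofReal (f x) with hfl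
  have hflm : Measurable fl := (ENNReal.continuous_ofReal.comp hf).measurable
  have hint : ∀ (x : ι → α) (j0 : ι), Integrable (fun t => f (Function.update x j0 t)) ν' := by
    intro x j0
    exact ContinuousOn.integrableOn_compact hK
      ((hf.comp (continuous_const.update j0 continuous_id)).continuousOn)
  have hstepl : ∀ x, (∀ j, x j ∈ K) → ∀ j0, fl x ≤
      ENNReal.ofReal B * ∫⁻ t, fl (Function.update x j0 t) ∂ν' := by
    intro x hx j0
    calc fl x ≤ ENNReal.ofReal (B * ∫ t in K, f (Function.update x j0 t) ∂ν) :=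
        ENNReal.ofReal_le_ofReal (hstep x hx j0)
    _ = ENNReal.ofReal B * ENNReal.ofReal (∫ t, f (Function.update x j0 t) ∂ν') := by
        rw [ENNReal.ofReal_mul hB]
    _ = ENNReal.ofReal B * ∫⁻ t, fl (Function.update x j0 t) ∂ν' := by
        rw [ofReal_integral_eq_lintegral_ofReal (hint x j0)
          (Eventually.of_forall fun t => hf0 _)]
  have main : ∀ s : Finset ι, ∀ x, (∀ j, x j ∈ K) →
      fl x ≤ ENNReal.ofReal B ^ s.card * lmarginal (fun _ => ν') s fl x := by
    intro s
    induction s using Finset.induction_on with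
    | empty => intro x hx; simp [lmarginal_empty]
    | @insert j0 s hj0 ih =>
      intro x hx
      have h2 : ∀ t, t ∈ K → fl (Function.update x j0 t) ≤
          ENNReal.ofReal B ^ s.card * lmarginal (fun _ => ν') s fl (Function.update x j0 t) := by
        intro t ht
        refine ih _ fun j => ?_
        rcases eq_or_ne j j0 with rfl | hne
        · simpa using ht
        · simpa [Function.update_of_ne hne] using hx j
      calc fl x ≤ ENNReal.ofReal B * ∫⁻ t, fl (Function.update x j0 t) ∂ν' := hstepl x hx j0
      _ ≤ ENNReal.ofReal B * ∫⁻ t, ENNReal.ofReal B ^ s.card *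
            lmarginal (fun _ => ν') s fl (Function.update x j0 t) ∂ν' := by
          refine mul_le_mul_right (lintegral_mono_ae ?_) _
          filter_upwards [ae_restrict_mem hK.measurableSet] with t ht using h2 t ht
      _ = ENNReal.ofReal B ^ (s.card + 1) *
            ∫⁻ t, lmarginal (fun _ => ν') s fl (Function.update x j0 t) ∂ν' := by
          have hmeas : Measurable fun t => lmarginal (fun _ : ι => ν') s fl (Function.update x j0 t) :=
            (Measurable.lmarginal _ hflm).comp (measurable_update x)
          rw [lintegral_const_mul _ hmeas]
          ring
      _ = ENNReal.ofReal B ^ (insert j0 s).card *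
            lmarginal (fun _ => ν') (insert j0 s) fl x := by
          rw [lmarginal_insert _ hflm hj0, Finset.card_insert_of_notMem hj0]
  intro x hx
  have h := main Finset.univ x hx
  rw [lmarginal_univ] at h
  have hPi : Measure.pi (fun _ : ι => ν') =
      (Measure.pi fun _ : ι => ν).restrict (Set.pi Set.univ fun _ => K) :=
    pi_restrict_eq ν hK.measurableSet
  have hSc : IsCompact (Set.pi Set.univ fun _ : ι => K) := isCompact_univ_pi fun _ => hK
  have hfint : Integrable f (Measure.pi fun _ : ι => ν') := by
    rw [hPi]; exact ContinuousOn.integrableOn_compact hSc hf.continuousOn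
  have hlig : ∫⁻ y, fl y ∂(Measure.pi fun _ : ι => ν') =
      ENNReal.ofReal (∫ y, f y ∂(Measure.pi fun _ : ι => ν')) :=
    (ofReal_integral_eq_lintegral_ofReal hfint (Eventually.of_forall hf0)).symm
  rw [hlig, ← ENNReal.ofReal_pow hB, ← ENNReal.ofReal_mul (pow_nonneg hB _)] at h
  have h2 := (ENNReal.ofReal_le_ofReal_iff (mul_nonneg (pow_nonneg hB _) (integral_nonneg hf0))).mp h
  calc f x ≤ B ^ Fintype.card ι * ∫ y, f y ∂(Measure.pi fun _ : ι => ν') := h2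
  _ = _ := by rw [hPi]

noncomputable def MkSup (K : Set (Fin n → ℂ)) (Q : (Fin n → ℂ) → ℝ) (k : ℕ)
    (e : Fin (Nk n k) ≃ {d : Fin n →₀ ℕ // (d.sum fun _ m => m) ≤ k}) : ℝ :=
  sSup ((fun x : Fin (Nk n k) → (Fin n → ℂ) =>
      ‖VDM k e x‖ * ∏ j : Fin (Nk n k), Real.exp (-(k : ℝ) * Q (x j))) ''
    {x : Fin (Nk n k) → (Fin n → ℂ) | ∀ j, x j ∈ K})

lemma deltaQk_eq_MkSup (K : Set (Fin n → ℂ)) (Q : (Fin n → ℂ) → ℝ) (k : ℕ)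
    (e : Fin (Nk n k) ≃ {d : Fin n →₀ ℕ // (d.sum fun _ m => m) ≤ k}) :
    deltaQk K Q k e = MkSup K Q k e ^ (((n : ℝ) + 1) / ((n : ℝ) * (k : ℝ) * (Nk n k : ℝ))) := rfl

lemma VDM_continuous (k : ℕ)
    (e : Fin (Nk n k) ≃ {d : Fin n →₀ ℕ // (d.sum fun _ m => m) ≤ k}) :
    Continuous (VDM k e) := by
  unfold VDM
  refine Continuous.matrix_det (continuous_matrix fun i j => ?_)
  simp only [Matrix.of_apply]
  fun_prop

lemma step_bound {K : Set (Fin n → ℂ)} {Q : (Fin n → ℂ) → ℝ}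
    (ν : Measure (Fin n → ℂ)) (k : ℕ)
    (e : Fin (Nk n k) ≃ {d : Fin n →₀ ℕ // (d.sum fun _ m => m) ≤ k})
    {C ε : ℝ} (hC : 0 < C) (hε : 0 < ε)
    (hBMk : ∀ p : MvPolynomial (Fin n) ℂ, p.totalDegree ≤ k → ∀ z ∈ K,
      ‖MvPolynomial.eval z p‖ * Real.exp (-Q z) ^ k ≤
        C * (1 + ε) ^ k * Real.sqrt (∫ w in K, ‖MvPolynomial.eval w p‖ ^ 2 *
          Real.exp (-Q w) ^ (2 * k) ∂ν))
    (x : Fin (Nk n k) → (Fin n → ℂ)) (hx : ∀ j, x j ∈ K) (j0 : Fin (Nk n k)) :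
    ‖VDM k e x‖ ^ 2 * ∏ j : Fin (Nk n k), Real.exp (-(2 * (k : ℝ)) * Q (x j)) ≤
      (C * (1 + ε) ^ k) ^ 2 * ∫ t in K, ‖VDM k e (Function.update x j0 t)‖ ^ 2 *
        ∏ j : Fin (Nk n k), Real.exp (-(2 * (k : ℝ)) * Q (Function.update x j0 t j)) ∂ν := by
  classical
  obtain ⟨p, hpdeg, hpev⟩ := exists_poly k e x j0
  have hbm := hBMk p hpdeg (x j0) (hx j0)
  have hI0 : 0 ≤ ∫ w in K, ‖MvPolynomial.eval w p‖ ^ 2 * Real.exp (-Q w) ^ (2 * k) ∂ν :=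
    integral_nonneg fun w => by positivity
  have hsq := pow_le_pow_left₀ (by positivity) hbm 2
  rw [mul_pow (C * (1 + ε) ^ k), Real.sq_sqrt hI0] at hsq
  set R := ∏ j ∈ Finset.univ.erase j0, Real.exp (-(2 * (k : ℝ)) * Q (x j)) with hR
  have hR0 : 0 ≤ R := Finset.prod_nonneg fun _ _ => (Real.exp_pos _).le
  have hfx : ‖VDM k e x‖ ^ 2 * ∏ j : Fin (Nk n k), Real.exp (-(2 * (k : ℝ)) * Q (x j))
      = (‖MvPolynomial.eval (x j0) p‖ * Real.exp (-Q (x j0)) ^ k) ^ 2 * R := by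
    rw [mul_pow]
    have h1 : ‖MvPolynomial.eval (x j0) p‖ = ‖VDM k e x‖ := by
      rw [hpev, Function.update_eq_self]
    have h2 : (Real.exp (-Q (x j0)) ^ k) ^ 2 = Real.exp (-(2 * (k : ℝ)) * Q (x j0)) := by
      rw [← pow_mul, ← Real.exp_nat_mul]
      congr 1
      push_cast
      ring
    rw [h1, h2, mul_assoc]
    congr 1
    exact (Finset.mul_prod_erase _ _ (Finset.mem_univ j0)).symm
  have hupd : ∀ t, ‖VDM k e (Function.update x j0 t)‖ ^ 2 *
      ∏ j : Fin (Nk n k), Real.exp (-(2 * (k : ℝ)) * Q (Function.update x j0 t j))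
      = (‖MvPolynomial.eval t p‖ ^ 2 * Real.exp (-Q t) ^ (2 * k)) * R := by
    intro t
    have h1 : ‖VDM k e (Function.update x j0 t)‖ = ‖MvPolynomial.eval t p‖ := by rw [hpev]
    have h2 : ∏ j : Fin (Nk n k), Real.exp (-(2 * (k : ℝ)) * Q (Function.update x j0 t j))
        = Real.exp (-(2 * (k : ℝ)) * Q t) * R := by
      rw [← Finset.mul_prod_erase _ _ (Finset.mem_univ j0)]
      congr 1
      · rw [Function.update_self]
      · exact Finset.prod_congr rfl fun j hj => by
          rw [Function.update_of_ne (Finset.ne_of_mem_erase hj)]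
    have h3 : Real.exp (-(2 * (k : ℝ)) * Q t) = Real.exp (-Q t) ^ (2 * k) := by
      rw [← Real.exp_nat_mul]
      congr 1
      push_cast
      ring
    rw [h1, h2, h3]
    ring
  have hIR : (∫ t in K, ‖VDM k e (Function.update x j0 t)‖ ^ 2 *
      ∏ j : Fin (Nk n k), Real.exp (-(2 * (k : ℝ)) * Q (Function.update x j0 t j)) ∂ν)
      = (∫ w in K, ‖MvPolynomial.eval w p‖ ^ 2 * Real.exp (-Q w) ^ (2 * k) ∂ν) * R := by
    simp_rw [hupd]
    exact integral_mul_const R _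
  rw [hfx, hIR, ← mul_assoc]
  exact mul_le_mul_of_nonneg_right hsq hR0

lemma Zk_bounds {K : Set (Fin n → ℂ)} (hK : IsCompact K) {z₀ : Fin n → ℂ} (hz₀ : z₀ ∈ K)
    {Q : (Fin n → ℂ) → ℝ} (hQ : Continuous Q)
    (ν : Measure (Fin n → ℂ)) [IsFiniteMeasure ν]
    (k : ℕ)
    (e : Fin (Nk n k) ≃ {d : Fin n →₀ ℕ // (d.sum fun _ m => m) ≤ k})
    {C ε : ℝ} (hC : 0 < C) (hε : 0 < ε)
    (hBMk : ∀ p : MvPolynomial (Fin n) ℂ, p.totalDegree ≤ k → ∀ z ∈ K,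
      ‖MvPolynomial.eval z p‖ * Real.exp (-Q z) ^ k ≤
        C * (1 + ε) ^ k * Real.sqrt (∫ w in K, ‖MvPolynomial.eval w p‖ ^ 2 *
          Real.exp (-Q w) ^ (2 * k) ∂ν)) :
    0 ≤ MkSup K Q k e ∧ 0 ≤ Zk K ν Q k e ∧
    Zk K ν Q k e ≤ MkSup K Q k e ^ 2 * ((ν K).toReal) ^ (Nk n k) ∧
    MkSup K Q k e ^ 2 ≤ ((C * (1 + ε) ^ k) ^ 2) ^ (Nk n k) * Zk K ν Q k e := by
  classical
  set F : (Fin (Nk n k) → (Fin n → ℂ)) → ℝ := fun x =>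
    ‖VDM k e x‖ * ∏ j : Fin (Nk n k), Real.exp (-(k : ℝ) * Q (x j)) with hF
  set f : (Fin (Nk n k) → (Fin n → ℂ)) → ℝ := fun x =>
    ‖VDM k e x‖ ^ 2 * ∏ j : Fin (Nk n k), Real.exp (-(2 * (k : ℝ)) * Q (x j)) with hf
  set S : Set (Fin (Nk n k) → (Fin n → ℂ)) := {x | ∀ j, x j ∈ K} with hSdef
  have hSeq : S = Set.pi Set.univ (fun _ => K) := by
    ext y; simp [hSdef, Set.mem_pi]
  have hSc : IsCompact S := hSeq ▸ isCompact_univ_pi fun _ => hK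
  have hF0 : ∀ x, 0 ≤ F x := fun x =>
    mul_nonneg (norm_nonneg _) (Finset.prod_nonneg fun _ _ => (Real.exp_pos _).le)
  have hf0 : ∀ x, 0 ≤ f x := fun x =>
    mul_nonneg (by positivity) (Finset.prod_nonneg fun _ _ => (Real.exp_pos _).le)
  have hFf : ∀ x, F x ^ 2 = f x := by
    intro x
    rw [hF, hf]
    simp only
    rw [mul_pow, ← Finset.prod_pow]
    congr 1
    refine Finset.prod_congr rfl fun j _ => ?_
    rw [← Real.exp_nat_mul]
    congr 1
    push_cast
    ring
  have hFc : Continuous F := by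
    rw [hF]
    have := VDM_continuous k e
    fun_prop
  have hfc : Continuous f := by
    rw [hf]
    have := VDM_continuous k e
    fun_prop
  -- MkSup facts
  have hne : ((fun x => F x) '' S).Nonempty := ⟨F (fun _ => z₀), ⟨fun _ => z₀, fun _ => hz₀, rfl⟩⟩
  have hbdd : BddAbove ((fun x => F x) '' S) := hSc.bddAbove_image hFc.continuousOn
  have hMS : MkSup K Q k e = sSup ((fun x => F x) '' S) := rfl
  have hM0 : 0 ≤ MkSup K Q k e := by
    rw [hMS]
    exact le_trans (hF0 (fun _ => z₀)) (le_csSup hbdd ⟨fun _ => z₀, fun _ => hz₀, rfl⟩)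
  have hFleM : ∀ x ∈ S, F x ≤ MkSup K Q k e := fun x hx => by
    rw [hMS]; exact le_csSup hbdd ⟨x, hx, rfl⟩
  -- Zk as integral over product of restricted measures
  have hPi : Measure.pi (fun _ : Fin (Nk n k) => ν.restrict K) =
      (Measure.pi fun _ : Fin (Nk n k) => ν).restrict (Set.pi Set.univ fun _ => K) :=
    pi_restrict_eq ν hK.measurableSet
  have hZint : Zk K ν Q k e = ∫ y, f y ∂(Measure.pi fun _ : Fin (Nk n k) => ν.restrict K) := by
    rw [hPi]
    unfold Zk
    rw [← hSeq]
  have hfint : Integrable f (Measure.pi fun _ : Fin (Nk n k) => ν.restrict K) := by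
    rw [hPi]
    exact ContinuousOn.integrableOn_compact (hSeq ▸ hSc) hfc.continuousOn
  have hZ0 : 0 ≤ Zk K ν Q k e := by
    rw [hZint]; exact integral_nonneg hf0
  refine ⟨hM0, hZ0, ?_, ?_⟩
  · -- upper bound
    have hae : ∀ᵐ y ∂(Measure.pi fun _ : Fin (Nk n k) => ν.restrict K),
        f y ≤ MkSup K Q k e ^ 2 := by
      rw [hPi]
      filter_upwards [ae_restrict_mem (hSeq ▸ hSc).measurableSet] with y hy
      rw [← hFf]
      exact pow_le_pow_left₀ (hF0 y) (hFleM y (hSeq ▸ hy)) 2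
    calc Zk K ν Q k e ≤ ∫ _, MkSup K Q k e ^ 2 ∂(Measure.pi fun _ : Fin (Nk n k) => ν.restrict K) := by
          rw [hZint]
          exact integral_mono_ae hfint (integrable_const _) hae
    _ = MkSup K Q k e ^ 2 * ((ν K).toReal) ^ (Nk n k) := by
        rw [integral_const, smul_eq_mul, mul_comm]
        congr 1
        rw [measureReal_def, Measure.pi_univ]
        simp [ENNReal.toReal_pow]
  · -- lower bound
    have hB : (0:ℝ) ≤ (C * (1 + ε) ^ k) ^ 2 := by positivity
    have hkey := induction_bound ν hK hfc hf0 hB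
      (fun x hx j0 => step_bound ν k e hC hε hBMk x hx j0) 
    have hkey' : ∀ x ∈ S, f x ≤ ((C * (1 + ε) ^ k) ^ 2) ^ (Nk n k) * Zk K ν Q k e := by
      intro x hx
      have h2 := hkey x hx
      rw [Fintype.card_fin] at h2
      rw [hZint, hPi]
      exact h2
    have hMle : MkSup K Q k e ≤
        Real.sqrt (((C * (1 + ε) ^ k) ^ 2) ^ (Nk n k) * Zk K ν Q k e) := by
      rw [hMS]
      refine csSup_le hne ?_
      rintro b ⟨y, hy, rfl⟩
      exact (Real.le_sqrt (hF0 y) (by positivity)).mpr (by rw [hFf]; exact hkey' y hy)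
    calc MkSup K Q k e ^ 2 ≤
        Real.sqrt (((C * (1 + ε) ^ k) ^ 2) ^ (Nk n k) * Zk K ν Q k e) ^ 2 :=
          pow_le_pow_left₀ hM0 hMle 2
    _ = _ := Real.sq_sqrt (by positivity)

lemma Nk_pos (n k : ℕ) : 0 < Nk n k := Nat.choose_pos (Nat.le_add_left k n)

lemma main_continuous (hn : 1 ≤ n)
    (K : Set (Fin n → ℂ)) (hK : IsCompact K)
    (Q : (Fin n → ℂ) → ℝ) (hQ : Continuous Q)
    (ν : Measure (Fin n → ℂ)) [IsFiniteMeasure ν]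
    (hBM : WeightedBernsteinMarkov K ν Q)
    (e : ∀ k : ℕ, Fin (Nk n k) ≃ {d : Fin n →₀ ℕ // (d.sum fun _ m => m) ≤ k})
    (L : ℝ) (hL : 0 ≤ L)
    (hδ : Tendsto (fun k => deltaQk K Q k (e k)) atTop (nhds L)) :
    Tendsto (fun k => Zk K ν Q k (e k) ^
      (((n : ℝ) + 1) / (2 * (n : ℝ) * (k : ℝ) * (Nk n k : ℝ)))) atTop (nhds L) := by
  classical
  have hn0 : (0:ℝ) < (n:ℝ) := by exact_mod_cast hn
  have hNk : ∀ k : ℕ, (0:ℝ) < (Nk n k : ℝ) := fun k => by exact_mod_cast Nk_pos n k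
  have hαpos : ∀ k : ℕ, 1 ≤ k →
      (0:ℝ) < ((n : ℝ) + 1) / ((n : ℝ) * (k : ℝ) * (Nk n k : ℝ)) := by
    intro k hk
    have hk0 : (0:ℝ) < (k:ℝ) := by exact_mod_cast hk
    exact div_pos (by positivity) (mul_pos (mul_pos hn0 hk0) (hNk k))
  have hβpos : ∀ k : ℕ, 1 ≤ k →
      (0:ℝ) < ((n : ℝ) + 1) / (2 * (n : ℝ) * (k : ℝ) * (Nk n k : ℝ)) := by
    intro k hk
    have hk0 : (0:ℝ) < (k:ℝ) := by exact_mod_cast hk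
    exact div_pos (by positivity) (mul_pos (mul_pos (mul_pos two_pos hn0) hk0) (hNk k))
  set T : ℕ → ℝ := fun k => Zk K ν Q k (e k) ^
      (((n : ℝ) + 1) / (2 * (n : ℝ) * (k : ℝ) * (Nk n k : ℝ))) with hT
  rcases Set.eq_empty_or_nonempty K with hKe | ⟨z₀, hz₀⟩
  · -- K empty : both δ and Z are eventually 0
    subst hKe
    have hSe : ∀ k : ℕ, {x : Fin (Nk n k) → (Fin n → ℂ) | ∀ j, x j ∈ (∅ : Set (Fin n → ℂ))} = ∅ :=
      fun k => Set.eq_empty_iff_forall_notMem.mpr fun x hx => hx ⟨0, Nk_pos n k⟩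
    have hδ0 : ∀ k : ℕ, 1 ≤ k → deltaQk (∅ : Set (Fin n → ℂ)) Q k (e k) = 0 := by
      intro k hk
      rw [deltaQk_eq_MkSup]
      have : MkSup (∅ : Set (Fin n → ℂ)) Q k (e k) = 0 := by
        unfold MkSup
        rw [hSe k, Set.image_empty, Real.sSup_empty]
      rw [this, Real.zero_rpow (ne_of_gt (hαpos k hk))]
    have hZ0 : ∀ k : ℕ, 1 ≤ k → Zk (∅ : Set (Fin n → ℂ)) ν Q k (e k) = 0 := by
      intro k hk
      unfold Zk
      rw [hSe k, Measure.restrict_empty, integral_zero_measure]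
    have hL0 : L = 0 := by
      refine tendsto_nhds_unique hδ ?_
      refine Tendsto.congr' ?_ (tendsto_const_nhds (x := (0:ℝ)))
      filter_upwards [eventually_ge_atTop 1] with k hk using (hδ0 k hk).symm
    rw [hL0]
    refine Tendsto.congr' ?_ (tendsto_const_nhds (x := (0:ℝ)))
    filter_upwards [eventually_ge_atTop 1] with k hk
    have hk0 : (0:ℝ) < (k:ℝ) := by exact_mod_cast hk
    rw [hT]
    simp only
    rw [hZ0 k hk, Real.zero_rpow (ne_of_gt (hβpos k hk))]
  rcases eq_or_ne (ν K) 0 with hν0 | hν0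
  · -- ν K = 0 contradicts Bernstein–Markov on nonempty K
    exfalso
    obtain ⟨C, hC, hbm⟩ := hBM 1 one_pos
    have h1 := hbm 1 le_rfl 1 (by simp) z₀ hz₀
    rw [Measure.restrict_eq_zero.mpr hν0, integral_zero_measure, Real.sqrt_zero, mul_zero] at h1
    simp only [map_one, norm_one, one_mul] at h1
    exact absurd h1 (not_le.mpr (pow_pos (Real.exp_pos _) 1))
  -- main case
  have ha : (0:ℝ) < (ν K).toReal := ENNReal.toReal_pos hν0 (measure_ne_top ν K)
  set a : ℝ := (ν K).toReal with hadef
  set q : ℝ := ((n:ℝ) + 1) / (n:ℝ) with hq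
  have hZnn : ∀ k : ℕ, 0 ≤ Zk K ν Q k (e k) := by
    intro k
    exact integral_nonneg fun x => mul_nonneg (by positivity)
      (Finset.prod_nonneg fun _ _ => (Real.exp_pos _).le)
  have hTnn : ∀ k : ℕ, 0 ≤ T k := fun k => Real.rpow_nonneg (hZnn k) _
  have hbT_below : IsBoundedUnder (· ≥ ·) atTop T :=
    isBoundedUnder_of ⟨0, fun k => hTnn k⟩
  -- upper bound
  obtain ⟨C₁, hC₁, hbm₁⟩ := hBM 1 one_pos
  have hup : ∀ k : ℕ, 1 ≤ k →
      T k ≤ deltaQk K Q k (e k) * a ^ (((n:ℝ) + 1) / (2 * (n:ℝ) * (k:ℝ))) := by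
    intro k hk
    have hk0 : (0:ℝ) < (k:ℝ) := by exact_mod_cast hk
    obtain ⟨hM0, hZ0, hZle, _⟩ := Zk_bounds hK hz₀ hQ ν k (e k) hC₁ one_pos
      (fun p hp z hz => hbm₁ k hk p hp z hz)
    have hβ : (0:ℝ) < ((n : ℝ) + 1) / (2 * (n : ℝ) * (k : ℝ) * (Nk n k : ℝ)) := hβpos k hk
    set β : ℝ := ((n : ℝ) + 1) / (2 * (n : ℝ) * (k : ℝ) * (Nk n k : ℝ)) with hβdef
    have h1 : T k ≤ (MkSup K Q k (e k) ^ 2 * a ^ (Nk n k)) ^ β :=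
      Real.rpow_le_rpow (hZnn k) hZle hβ.le
    have h2 : (MkSup K Q k (e k) ^ 2 * a ^ (Nk n k)) ^ β
        = (MkSup K Q k (e k) ^ 2) ^ β * ((a ^ (Nk n k) : ℝ)) ^ β :=
      Real.mul_rpow (by positivity) (pow_nonneg ha.le _)
    have h3 : (MkSup K Q k (e k) ^ 2) ^ β = MkSup K Q k (e k) ^
        (((n : ℝ) + 1) / ((n : ℝ) * (k : ℝ) * (Nk n k : ℝ))) := by
      rw [← Real.rpow_natCast (MkSup K Q k (e k)) 2, ← Real.rpow_mul hM0]
      congr 1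
      rw [hβdef]
      push_cast
      field_simp
    have h4 : ((a ^ (Nk n k) : ℝ)) ^ β = a ^ (((n:ℝ) + 1) / (2 * (n:ℝ) * (k:ℝ))) := by
      rw [← Real.rpow_natCast a (Nk n k), ← Real.rpow_mul ha.le]
      congr 1
      rw [hβdef]
      have hN := (hNk k).ne'
      field_simp
    rw [h2, h3, h4] at h1
    rw [deltaQk_eq_MkSup]
    exact h1
  have hc2 : Tendsto (fun k : ℕ => ((n:ℝ) + 1) / (2 * (n:ℝ) * (k:ℝ))) atTop (nhds 0) := by
    refine Tendsto.div_atTop tendsto_const_nhds ?_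
    exact Tendsto.const_mul_atTop (mul_pos two_pos hn0) tendsto_natCast_atTop_atTop
  have hu_tendsto : Tendsto (fun k : ℕ => deltaQk K Q k (e k) *
      a ^ (((n:ℝ) + 1) / (2 * (n:ℝ) * (k:ℝ)))) atTop (nhds L) := by
    have h5 : Tendsto (fun k : ℕ => a ^ (((n:ℝ) + 1) / (2 * (n:ℝ) * (k:ℝ)))) atTop (nhds 1) := by
      have := ((Real.continuousAt_const_rpow (a := a) (b := 0) ha.ne').tendsto).comp hc2
      rwa [Real.rpow_zero] at this
    simpa using hδ.mul h5
  have hTu : T ≤ᶠ[atTop] fun k => deltaQk K Q k (e k) *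
      a ^ (((n:ℝ) + 1) / (2 * (n:ℝ) * (k:ℝ))) := by
    filter_upwards [eventually_ge_atTop 1] with k hk using hup k hk
  have hbT_above : IsBoundedUnder (· ≤ ·) atTop T :=
    (hu_tendsto.isBoundedUnder_le).mono_le hTu
  have hlimsup : limsup T atTop ≤ L := by
    calc limsup T atTop ≤ limsup (fun k => deltaQk K Q k (e k) *
        a ^ (((n:ℝ) + 1) / (2 * (n:ℝ) * (k:ℝ)))) atTop :=
          limsup_le_limsup hTu (hbT_below.isCoboundedUnder_flip) (hu_tendsto.isBoundedUnder_le)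
    _ = L := hu_tendsto.limsup_eq
  have hliminf : L ≤ liminf T atTop := by
    refine le_of_forall_lt fun b hb => ?_
    -- choose ε > 0 with b < L / (1+ε)^q
    have hcont : Tendsto (fun r : ℝ => L / (1 + r) ^ q) (nhdsWithin 0 (Set.Ioi 0)) (nhds L) := by
      have hca : ContinuousAt (fun r : ℝ => L / (1 + r) ^ q) 0 := by
        refine ContinuousAt.div continuousAt_const ?_ ?_
        · exact (continuousAt_const.add continuousAt_id).rpow_const (Or.inl (by norm_num))
        · simp [Real.one_rpow]
      have := hca.tendsto
      simp only [add_zero, Real.one_rpow, div_one] at this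
      exact this.mono_left nhdsWithin_le_nhds
    obtain ⟨ε, hbε, hε⟩ := ((hcont.eventually_const_lt hb).and self_mem_nhdsWithin).exists
    obtain ⟨C, hC, hbm⟩ := hBM ε hε
    have h1ε : (0:ℝ) < 1 + ε := by linarith
    have hεq : (0:ℝ) < (1 + ε) ^ q := Real.rpow_pos_of_pos h1ε q
    have hlow : ∀ k : ℕ, 1 ≤ k → deltaQk K Q k (e k) ≤
        C ^ (((n:ℝ) + 1) / ((n:ℝ) * (k:ℝ))) * (1 + ε) ^ q * T k := by
      intro k hk
      have hk0 : (0:ℝ) < (k:ℝ) := by exact_mod_cast hk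
      obtain ⟨hM0, hZ0, _, hMle⟩ := Zk_bounds hK hz₀ hQ ν k (e k) hC hε
        (fun p hp z hz => hbm k hk p hp z hz)
      have hβ : (0:ℝ) < ((n : ℝ) + 1) / (2 * (n : ℝ) * (k : ℝ) * (Nk n k : ℝ)) := hβpos k hk
      set β : ℝ := ((n : ℝ) + 1) / (2 * (n : ℝ) * (k : ℝ) * (Nk n k : ℝ)) with hβdef
      have hCε : (0:ℝ) < C * (1 + ε) ^ k := mul_pos hC (pow_pos h1ε k)
      have h1 : deltaQk K Q k (e k) = (MkSup K Q k (e k) ^ 2) ^ β := by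
        rw [deltaQk_eq_MkSup, ← Real.rpow_natCast (MkSup K Q k (e k)) 2, ← Real.rpow_mul hM0]
        congr 1
        rw [hβdef]
        push_cast
        field_simp
      have h2 : (MkSup K Q k (e k) ^ 2) ^ β ≤
          ((((C * (1 + ε) ^ k) ^ 2) ^ (Nk n k)) * Zk K ν Q k (e k)) ^ β :=
        Real.rpow_le_rpow (by positivity) hMle hβ.le
      have h3 : ((((C * (1 + ε) ^ k) ^ 2) ^ (Nk n k)) * Zk K ν Q k (e k)) ^ β
          = (((C * (1 + ε) ^ k) ^ 2) ^ (Nk n k) : ℝ) ^ β * T k :=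
        Real.mul_rpow (by positivity) (hZnn k)
      have h4 : ((((C * (1 + ε) ^ k) ^ 2) ^ (Nk n k) : ℝ)) ^ β =
          C ^ (((n:ℝ) + 1) / ((n:ℝ) * (k:ℝ))) * (1 + ε) ^ q := by
        rw [← pow_mul, ← Real.rpow_natCast (C * (1 + ε) ^ k) (2 * Nk n k),
          ← Real.rpow_mul hCε.le]
        rw [Real.mul_rpow hC.le (pow_nonneg h1ε.le k)]
        congr 1
        · congr 1
          rw [hβdef]
          have hN := (hNk k).ne'
          push_cast
          field_simp
        · rw [← Real.rpow_natCast (1 + ε) k, ← Real.rpow_mul h1ε.le]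
          congr 1
          rw [hβdef, hq]
          have hN := (hNk k).ne'
          push_cast
          field_simp
      calc deltaQk K Q k (e k) = (MkSup K Q k (e k) ^ 2) ^ β := h1
      _ ≤ _ := h2
      _ = _ := by rw [h3, h4]
    have hl_tendsto : Tendsto (fun k : ℕ => deltaQk K Q k (e k) /
        (C ^ (((n:ℝ) + 1) / ((n:ℝ) * (k:ℝ))) * (1 + ε) ^ q)) atTop (nhds (L / (1 * (1 + ε) ^ q))) := by
      refine Tendsto.div hδ ?_ (by rw [one_mul]; exact hεq.ne')
      refine Tendsto.mul ?_ tendsto_const_nhds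
      have hc3 : Tendsto (fun k : ℕ => ((n:ℝ) + 1) / ((n:ℝ) * (k:ℝ))) atTop (nhds 0) := by
        refine Tendsto.div_atTop tendsto_const_nhds ?_
        exact Tendsto.const_mul_atTop hn0 tendsto_natCast_atTop_atTop
      have := ((Real.continuousAt_const_rpow (a := C) (b := 0) hC.ne').tendsto).comp hc3
      rwa [Real.rpow_zero] at this
    have hlT : (fun k : ℕ => deltaQk K Q k (e k) /
        (C ^ (((n:ℝ) + 1) / ((n:ℝ) * (k:ℝ))) * (1 + ε) ^ q)) ≤ᶠ[atTop] T := by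
      filter_upwards [eventually_ge_atTop 1] with k hk
      rw [div_le_iff₀ (mul_pos (Real.rpow_pos_of_pos hC _) hεq)]
      calc deltaQk K Q k (e k) ≤ C ^ (((n:ℝ) + 1) / ((n:ℝ) * (k:ℝ))) * (1 + ε) ^ q * T k :=
        hlow k hk
      _ = T k * (C ^ (((n:ℝ) + 1) / ((n:ℝ) * (k:ℝ))) * (1 + ε) ^ q) := by ring
    calc b < L / (1 + ε) ^ q := hbε
    _ = L / (1 * (1 + ε) ^ q) := by rw [one_mul]
    _ = liminf (fun k : ℕ => deltaQk K Q k (e k) /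
        (C ^ (((n:ℝ) + 1) / ((n:ℝ) * (k:ℝ))) * (1 + ε) ^ q)) atTop := hl_tendsto.liminf_eq.symm
    _ ≤ liminf T atTop :=
        liminf_le_liminf hlT (hl_tendsto.isBoundedUnder_ge) (hbT_above.isCoboundedUnder_flip)
  exact tendsto_of_le_liminf_of_limsup_le hliminf hlimsup hbT_above hbT_below

/-- Let `K ⊂ ℂ^n` be compact, `Q` continuous on `K`, and `(K, ν, Q)` satisfy the weighted
Bernstein–Markov property.  If `δ^{Q,k}(K) → L ≥ 0` as `k → ∞`, then
`Z_k^{(n+1)/(2 n k N_k)} → L` as `k → ∞`. -/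
theorem Zk_tendsto_weighted_transfinite_diameter (hn : 1 ≤ n)
    (K : Set (Fin n → ℂ)) (hK : IsCompact K)
    (Q : (Fin n → ℂ) → ℝ) (hQ : ContinuousOn Q K)
    (ν : Measure (Fin n → ℂ)) [IsFiniteMeasure ν] (hν : ν Kᶜ = 0)
    (hBM : WeightedBernsteinMarkov K ν Q)
    (e : ∀ k : ℕ, Fin (Nk n k) ≃ {d : Fin n →₀ ℕ // (d.sum fun _ m => m) ≤ k})
    (L : ℝ) (hL : 0 ≤ L)
    (hδ : Tendsto (fun k => deltaQk K Q k (e k)) atTop (nhds L)) :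
    Tendsto (fun k => Zk K ν Q k (e k) ^
      (((n : ℝ) + 1) / (2 * (n : ℝ) * (k : ℝ) * (Nk n k : ℝ)))) atTop (nhds L) := by
  obtain ⟨g, hg⟩ := ContinuousMap.exists_restrict_eq (Y := ℝ) hK.isClosed
    ⟨K.restrict Q, hQ.restrict⟩
  have hgK : ∀ z ∈ K, g z = Q z := by
    intro z hz
    have h2 := DFunLike.congr_fun hg (⟨z, hz⟩ : K)
    exact h2
  have hset : ∀ k : ℕ, MeasurableSet {x : Fin (Nk n k) → (Fin n → ℂ) | ∀ j, x j ∈ K} := by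
    intro k
    have h3 : {x : Fin (Nk n k) → (Fin n → ℂ) | ∀ j, x j ∈ K}
        = Set.pi Set.univ (fun _ => K) := by
      ext y; simp [Set.mem_pi]
    rw [h3]
    exact MeasurableSet.univ_pi fun _ => hK.measurableSet
  have hZeq : ∀ k, Zk K ν Q k (e k) = Zk K ν (⇑g) k (e k) := by
    intro k
    unfold Zk
    refine setIntegral_congr_fun (hset k) ?_
    intro x hx
    simp only
    congr 1
    exact Finset.prod_congr rfl fun j _ => by rw [hgK _ (hx j)]
  have hδeq : ∀ k, deltaQk K Q k (e k) = deltaQk K (⇑g) k (e k) := by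
    intro k
    unfold deltaQk
    congr 2
    refine Set.image_congr ?_
    intro x hx
    congr 1
    exact Finset.prod_congr rfl fun j _ => by rw [hgK _ (hx j)]
  have hBMg : WeightedBernsteinMarkov K ν ⇑g := by
    intro ε hε
    obtain ⟨C, hC, h⟩ := hBM ε hε
    refine ⟨C, hC, fun k hk p hp z hz => ?_⟩
    have hI : (∫ w in K, ‖MvPolynomial.eval w p‖ ^ 2 * Real.exp (-g w) ^ (2 * k) ∂ν)
        = ∫ w in K, ‖MvPolynomial.eval w p‖ ^ 2 * Real.exp (-Q w) ^ (2 * k) ∂ν :=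
      setIntegral_congr_fun hK.measurableSet (fun w hw => by rw [hgK w hw])
    rw [hI, hgK z hz]
    exact h k hk p hp z hz
  have hmain := main_continuous hn K hK (⇑g) g.continuous ν hBMg e L hL (hδ.congr hδeq)
  exact hmain.congr fun k => congrArg (· ^ (((n : ℝ) + 1) /
    (2 * (n : ℝ) * (k : ℝ) * (Nk n k : ℝ)))) (hZeq k).symm
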